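/- Define L(a) = (3/4 − 2a)·(2√(2a(1−a)) + √(3/8)) for a ∈ [0,1/4]. Then (L(a) − L(0))/a → +∞ as a → 0⁺; in particular there exists ε > 0 such that L(a) > L(0) for all a ∈ (0,ε). -/

import Mathlib

open Set Filter Topology

/-- For `L(a) = (3/4 − 2a)(2√(2a(1−a)) + √(3/8))`, the difference quotient
`(L(a) − L(0))/a` tends to `+∞` as `a → 0⁺`; in particular `L(a) > L(0)` for all
sufficiently small `a > 0`. -/
theorem sweepout_length_increases_near_zero :
    Filter.Tendsto
      (fun a : ℝ =>
        (((3 / 4 - 2 * a) * (2 * Real.sqrt (2 * a * (1 - a)) + Real.sqrt (3 / 8)))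
          - ((3 / 4 - 2 * 0) * (2 * Real.sqrt (2 * 0 * (1 - 0)) + Real.sqrt (3 / 8)))) / a)
      (nhdsWithin 0 (Set.Ioi 0)) Filter.atTop ∧
    ∃ ε > (0 : ℝ), ∀ a ∈ Set.Ioo (0 : ℝ) ε,
      (3 / 4 - 2 * 0) * (2 * Real.sqrt (2 * 0 * (1 - 0)) + Real.sqrt (3 / 8)) <
        (3 / 4 - 2 * a) * (2 * Real.sqrt (2 * a * (1 - a)) + Real.sqrt (3 / 8)) := by
  set s : ℝ := Real.sqrt (3 / 8) with hs
  set f : ℝ → ℝ := fun a : ℝ =>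
    (((3 / 4 - 2 * a) * (2 * Real.sqrt (2 * a * (1 - a)) + Real.sqrt (3 / 8)))
      - ((3 / 4 - 2 * 0) * (2 * Real.sqrt (2 * 0 * (1 - 0)) + Real.sqrt (3 / 8)))) / a
    with hf
  have hmain : Tendsto (fun a : ℝ => (Real.sqrt a)⁻¹ - 2 * s) (𝓝[>] (0:ℝ)) atTop := by
    apply tendsto_atTop_add_const_right
    have h1 : Tendsto (fun a : ℝ => Real.sqrt a) (𝓝[>] (0:ℝ)) (𝓝[>] (0:ℝ)) := by
      rw [tendsto_nhdsWithin_iff]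
      constructor
      · exact (Real.continuous_sqrt.tendsto' 0 0 Real.sqrt_zero).mono_left nhdsWithin_le_nhds
      · filter_upwards [self_mem_nhdsWithin] with a ha
        exact Real.sqrt_pos.mpr ha
    exact tendsto_inv_nhdsGT_zero.comp h1
  have hbound : ∀ a ∈ Ioo (0:ℝ) (1/8), (Real.sqrt a)⁻¹ - 2 * s ≤ f a := by
    intro a ha
    obtain ⟨ha0, ha8⟩ := ha
    have hsqa : (0:ℝ) < Real.sqrt a := Real.sqrt_pos.mpr ha0
    set r : ℝ := Real.sqrt (2 * a * (1 - a)) with hr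
    have hfeq : f a = (2 * (3 / 4 - 2 * a) * r - 2 * a * s) / a := by
      simp only [hf]
      rw [mul_zero, zero_mul, Real.sqrt_zero]
      congr 1
      ring
    rw [hfeq, le_div_iff₀ ha0]
    have hra : Real.sqrt a ≤ r := by
      apply Real.sqrt_le_sqrt
      nlinarith
    have hr0 : 0 ≤ r := Real.sqrt_nonneg _
    have h2 : r ≤ 2 * (3 / 4 - 2 * a) * r := by nlinarith
    have hinv : (Real.sqrt a)⁻¹ * a = Real.sqrt a := by
      rw [← Real.sqrt_mul_self ha0.le]
      field_simp
      rw [Real.sq_sqrt (Real.sqrt_nonneg _)]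
    nlinarith [hinv]
  have hev : ∀ᶠ a in 𝓝[>] (0:ℝ), (Real.sqrt a)⁻¹ - 2 * s ≤ f a := by
    filter_upwards [Ioo_mem_nhdsGT_of_mem (by norm_num : (0:ℝ) ∈ Ico (0:ℝ) (1/8))]
      with a ha using hbound a ha
  have htend : Tendsto f (𝓝[>] (0:ℝ)) atTop := tendsto_atTop_mono' _ hev hmain
  refine ⟨htend, ?_⟩
  have hpos : ∀ᶠ a in 𝓝[>] (0:ℝ), 0 < f a := htend.eventually_gt_atTop 0
  rw [eventually_nhdsWithin_iff, Metric.eventually_nhds_iff] at hpos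
  obtain ⟨ε, hε, hball⟩ := hpos
  refine ⟨ε, hε, ?_⟩
  intro a ha
  have hdist : dist a (0:ℝ) < ε := by
    rw [Real.dist_eq, sub_zero, abs_of_pos ha.1]; exact ha.2
  have hfa : 0 < f a := hball hdist ha.1
  have hcancel : f a * a =
      ((3 / 4 - 2 * a) * (2 * Real.sqrt (2 * a * (1 - a)) + Real.sqrt (3 / 8)))
        - ((3 / 4 - 2 * 0) * (2 * Real.sqrt (2 * 0 * (1 - 0)) + Real.sqrt (3 / 8))) := by
    simp only [hf]
    exact div_mul_cancel₀ _ ha.1.ne'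
  nlinarith [mul_pos hfa ha.1]
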